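/- For every irrational x ∈ (0,1), the backward continued fraction partial quotients satisfy: x = lim_{n→∞} ψ_{b_1(x)} ∘ ⋯ ∘ ψ_{b_n(x)}(0), where ψ_i(y) = 1 − 1/(y + i − 1) and b_n(x) ≥ 2 are the backward continued fraction digits of x. -/

import Mathlib

/-- The Renyi backward continued fraction map. -/
noncomputable def renyi (y : ℝ) : ℝ := Int.fract (1 / (1 - y))

/-- The (n+1)-st backward continued fraction digit of the fractional part of x. -/
noncomputable def bDigit (x : ℝ) (n : ℕ) : ℤ := ⌊1 / (1 - renyi^[n] (Int.fract x))⌋ + 1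

/-- BCF branch with integer index. -/
noncomputable def psiZ (i : ℤ) (y : ℝ) : ℝ := 1 - 1 / (y + i - 1)

/-- `bcfApprox x k n` is the point obtained by applying the branches for digits
`b (k+1), ..., b (k+n)` of `x` (outermost first) to `0`. -/
noncomputable def bcfApprox (x : ℝ) : ℕ → ℕ → ℝ
  | _, 0 => 0
  | k, n + 1 => psiZ (bDigit x k) (bcfApprox x (k + 1) n)

/-- The composition of branches, as a function. -/
noncomputable def phiN (x : ℝ) : ℕ → ℕ → ℝ → ℝ
  | _, 0, y => y
  | k, n + 1, y => psiZ (bDigit x k) (phiN x (k + 1) n y)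

lemma bcfApprox_eq_phiN (x : ℝ) : ∀ n k, bcfApprox x k n = phiN x k n 0 := by
  intro n
  induction n with
  | zero => intro k; rfl
  | succ n ih =>
      intro k
      show psiZ _ (bcfApprox x (k+1) n) = psiZ _ (phiN x (k+1) n 0)
      rw [ih]

lemma phiN_append (x : ℝ) : ∀ n k y,
    phiN x k (n + 1) y = phiN x k n (psiZ (bDigit x (k + n)) y) := by
  intro n
  induction n with
  | zero => intro k y; rfl
  | succ n ih =>
      intro k y
      show psiZ (bDigit x k) (phiN x (k+1) (n+1) y) = psiZ (bDigit x k) (phiN x (k+1) n _)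
      rw [ih (k+1) y, show k + 1 + n = k + (n + 1) from by omega]

lemma renyi_step (y : ℝ) (hy : y ∈ Set.Ioo (0:ℝ) 1) (hi : Irrational y) :
    renyi y ∈ Set.Ioo (0:ℝ) 1 ∧ Irrational (renyi y) := by
  have h1 : (0:ℝ) < 1 - y := by linarith [hy.2]
  have hirr1 : Irrational (1 - y) := by simpa using hi.intCast_sub 1
  have hirr2 : Irrational (1 / (1 - y)) := by
    rw [one_div]; exact hirr1.inv
  have hirr3 : Irrational (renyi y) := by
    unfold renyi
    rw [Int.fract]
    exact hirr2.sub_intCast _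
  refine ⟨⟨?_, ?_⟩, hirr3⟩
  · rcases lt_or_eq_of_le (Int.fract_nonneg (1 / (1 - y))) with h | h
    · exact h
    · exact absurd h.symm hirr3.ne_zero
  · exact Int.fract_lt_one _

lemma orbit_mem (x : ℝ) (hx : x ∈ Set.Ioo (0 : ℝ) 1) (hirr : Irrational x) (n : ℕ) :
    renyi^[n] (Int.fract x) ∈ Set.Ioo (0:ℝ) 1 ∧ Irrational (renyi^[n] (Int.fract x)) := by
  have hfr : Int.fract x = x := Int.fract_eq_self.2 ⟨le_of_lt hx.1, hx.2⟩
  induction n with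
  | zero => simpa [hfr] using ⟨hx, hirr⟩
  | succ n ih =>
      rw [Function.iterate_succ_apply']
      exact renyi_step _ ih.1 ih.2

lemma bDigit_ge_two (x : ℝ) (hx : x ∈ Set.Ioo (0 : ℝ) 1) (hirr : Irrational x) (n : ℕ) :
    (2:ℝ) ≤ (bDigit x n : ℝ) := by
  obtain ⟨⟨h0, h1⟩, _⟩ := orbit_mem x hx hirr n
  have h2 : (1:ℝ) < 1 / (1 - renyi^[n] (Int.fract x)) :=
    one_lt_one_div (by linarith) (by linarith)
  have h3 : (1:ℤ) ≤ ⌊1 / (1 - renyi^[n] (Int.fract x))⌋ :=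
    Int.le_floor.2 (by exact_mod_cast h2.le)
  have h4 : (2:ℤ) ≤ bDigit x n := by unfold bDigit; omega
  exact_mod_cast h4

lemma psiZ_digit_orbit (x : ℝ) (hx : x ∈ Set.Ioo (0 : ℝ) 1) (hirr : Irrational x) (n : ℕ) :
    psiZ (bDigit x n) (renyi^[n+1] (Int.fract x)) = renyi^[n] (Int.fract x) := by
  obtain ⟨⟨h0, h1⟩, _⟩ := orbit_mem x hx hirr n
  set t := renyi^[n] (Int.fract x) with ht
  have hne : (1:ℝ) - t ≠ 0 := by linarith
  have hz : (1:ℝ) / (1 - t) ≠ 0 := one_div_ne_zero hne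
  have hiter : renyi^[n+1] (Int.fract x) = Int.fract (1 / (1 - t)) := by
    rw [Function.iterate_succ_apply', ht]; rfl
  have hfr : Int.fract (1 / (1 - t)) = 1 / (1 - t) - (⌊1 / (1 - t)⌋ : ℝ) := rfl
  have hb : ((bDigit x n : ℤ) : ℝ) = (⌊1 / (1 - t)⌋ : ℝ) + 1 := by
    unfold bDigit
    rw [← ht]
    push_cast
    ring
  rw [hiter, hfr]
  unfold psiZ
  rw [hb]
  have harg : 1 / (1 - t) - (⌊1 / (1 - t)⌋ : ℝ) + ((⌊1 / (1 - t)⌋ : ℝ) + 1) - 1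
      = 1 / (1 - t) := by ring
  rw [harg, one_div_one_div]
  ring

lemma x_eq_phiN (x : ℝ) (hx : x ∈ Set.Ioo (0 : ℝ) 1) (hirr : Irrational x) (n : ℕ) :
    phiN x 0 n (renyi^[n] (Int.fract x)) = x := by
  induction n with
  | zero =>
      show Int.fract x = x
      exact Int.fract_eq_self.2 ⟨le_of_lt hx.1, hx.2⟩
  | succ n ih =>
      rw [phiN_append, Nat.zero_add, psiZ_digit_orbit x hx hirr n]
      exact ih

lemma moebius_form (x : ℝ) (hx : x ∈ Set.Ioo (0 : ℝ) 1) (hirr : Irrational x) (n : ℕ) :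
    ∃ a b c d : ℝ, a * d - b * c = 1 ∧ 0 ≤ c ∧ (n:ℝ) ≤ c ∧ 1 ≤ d ∧
      ∀ y : ℝ, 0 ≤ y → y ≤ 1 → phiN x 0 n y = (a * y + b) / (c * y + d) := by
  induction n with
  | zero =>
      exact ⟨1, 0, 0, 1, by ring, le_refl _, by norm_num, le_refl _,
        fun y _ _ => by show y = _; simp⟩
  | succ n ih =>
      obtain ⟨a, b, c, d, hdet, hc0, hcn, hd1, hform⟩ := ih
      have hβ : (2:ℝ) ≤ (bDigit x n : ℝ) := bDigit_ge_two x hx hirr n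
      set β : ℝ := (bDigit x n : ℝ) with hβdef
      refine ⟨a + b, (β - 2) * a + (β - 1) * b, c + d, (β - 2) * c + (β - 1) * d,
        by linear_combination hdet, by linarith, by push_cast; linarith, by nlinarith, ?_⟩
      intro y hy0 hy1
      have hD : (0:ℝ) < y + β - 1 := by linarith
      have hψ : psiZ (bDigit x n) y = (y + β - 2) / (y + β - 1) := by
        show 1 - 1 / (y + β - 1) = _
        field_simp
        ring
      have hψ0 : 0 ≤ psiZ (bDigit x n) y := by
        rw [hψ]; exact div_nonneg (by linarith) hD.le
      have hψ1 : psiZ (bDigit x n) y ≤ 1 := by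
        rw [hψ, div_le_one hD]; linarith
      rw [phiN_append, Nat.zero_add, hform _ hψ0 hψ1, hψ]
      have hden1 : (0:ℝ) < c * ((y + β - 2) / (y + β - 1)) + d := by
        have h5 : 0 ≤ c * ((y + β - 2) / (y + β - 1)) :=
          mul_nonneg hc0 (div_nonneg (by linarith) hD.le)
        linarith
      have hden2 : (0:ℝ) < (c + d) * y + ((β - 2) * c + (β - 1) * d) := by
        nlinarith
      rw [div_eq_div_iff hden1.ne' hden2.ne']
      field_simp
      ring

lemma error_bound (x : ℝ) (hx : x ∈ Set.Ioo (0 : ℝ) 1) (hirr : Irrational x) (n : ℕ) :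
    |bcfApprox x 0 n - x| ≤ 1 / ((n:ℝ) + 1) := by
  obtain ⟨a, b, c, d, hdet, hc0, hcn, hd1, hform⟩ := moebius_form x hx hirr n
  obtain ⟨⟨ht0, ht1⟩, _⟩ := orbit_mem x hx hirr n
  set t := renyi^[n] (Int.fract x) with htdef
  have hxeq : x = (a * t + b) / (c * t + d) := by
    rw [← x_eq_phiN x hx hirr n, hform t ht0.le ht1.le]
  have happrox : bcfApprox x 0 n = b / d := by
    rw [bcfApprox_eq_phiN, hform 0 le_rfl zero_le_one]
    norm_num
  have hd0 : (0:ℝ) < d := by linarith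
  have hctd : (0:ℝ) < c * t + d := by nlinarith
  have hdiff : x - bcfApprox x 0 n = t / ((c * t + d) * d) := by
    rw [happrox]
    rw [hxeq]
    field_simp
    linear_combination t * hdet
  have hpos : 0 ≤ x - bcfApprox x 0 n := by
    rw [hdiff]; positivity
  rw [abs_sub_comm, abs_of_nonneg hpos, hdiff]
  rw [div_le_div_iff₀ (by positivity) (by positivity)]
  nlinarith

theorem stmt11 (x : ℝ) (hx : x ∈ Set.Ioo (0 : ℝ) 1) (hirr : Irrational x) :
    Filter.Tendsto (fun n => bcfApprox x 0 n) Filter.atTop (nhds x) := by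
  have h0 : Filter.Tendsto (fun n : ℕ => |bcfApprox x 0 n - x|) Filter.atTop (nhds 0) :=
    squeeze_zero (fun n => abs_nonneg _) (fun n => error_bound x hx hirr n)
      tendsto_one_div_add_atTop_nhds_zero_nat
  rw [tendsto_iff_dist_tendsto_zero]
  simpa [Real.dist_eq] using h0
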